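/- arXiv:2308.15460 — 2 statements merged into one kernel-verified Lean document; each statement's English description precedes it below -/
import Mathlib

section
/- Let 0 < λ ≤ 1, d_± = (1 ± √λ)². The Marčenko–Pastur density p(x) = √((d_+ − x)(x − d_−)) / (2πλx) on [d_−, d_+] satisfies ∫_{d_−}^{d_+} p(x)/(d_+ − x) dx = 1/(√λ (1 + √λ)). -/
open Real

set_option maxHeartbeats 1000000 in

lemma mp_core (s : ℝ) (hs0 : 0 < s) (hs1 : s < 1) :
    (∫ x in ((1 - s) ^ 2)..((1 + s) ^ 2),
        (Real.sqrt (((1 + s) ^ 2 - x) * (x - (1 - s) ^ 2)) /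
          (2 * Real.pi * s ^ 2 * x)) / ((1 + s) ^ 2 - x))
      = 1 / (s * (1 + s)) := by
  have hpi := Real.pi_pos
  have h1s : (0:ℝ) < 1 - s := by linarith
  have ha : (0:ℝ) < (1 - s) ^ 2 := by positivity
  have hab : ((1 - s) ^ 2 : ℝ) < (1 + s) ^ 2 := by nlinarith
  set F : ℝ → ℝ := fun x => 1 / (2 * Real.pi * s ^ 2) *
      (Real.arcsin ((2 * x - (2 + 2 * s ^ 2)) / (4 * s)) -
        (1 - s) / (1 + s) *
          Real.arcsin (((2 + 2 * s ^ 2) * x - 2 * (1 - s ^ 2) ^ 2) / (4 * s * x))) with hF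
  have hcont : ContinuousOn F (Set.Icc ((1 - s) ^ 2) ((1 + s) ^ 2)) := by
    apply ContinuousOn.mul continuousOn_const
    apply ContinuousOn.sub
    · exact Real.continuous_arcsin.comp_continuousOn (by fun_prop)
    · apply ContinuousOn.mul continuousOn_const
      apply Real.continuous_arcsin.comp_continuousOn
      apply ContinuousOn.div (by fun_prop) (by fun_prop)
      intro x hx
      have hx0 : 0 < x := lt_of_lt_of_le ha hx.1
      positivity
  have hderiv : ∀ x ∈ Set.Ioo ((1 - s) ^ 2) ((1 + s) ^ 2),
      HasDerivAt F ((Real.sqrt (((1 + s) ^ 2 - x) * (x - (1 - s) ^ 2)) /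
          (2 * Real.pi * s ^ 2 * x)) / ((1 + s) ^ 2 - x)) x := by
    intro x hx
    have hx0 : 0 < x := lt_of_lt_of_le ha hx.1.le
    have hbx : 0 < (1 + s) ^ 2 - x := by linarith [hx.2]
    have hxa : 0 < x - (1 - s) ^ 2 := by linarith [hx.1]
    set S : ℝ := Real.sqrt (((1 + s) ^ 2 - x) * (x - (1 - s) ^ 2)) with hS_def
    have hS2 : S ^ 2 = ((1 + s) ^ 2 - x) * (x - (1 - s) ^ 2) :=
      Real.sq_sqrt (by positivity)
    have hS0 : 0 < S := Real.sqrt_pos.mpr (by positivity)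
    -- first arcsin term
    have harg1 : HasDerivAt (fun y : ℝ => (2 * y - (2 + 2 * s ^ 2)) / (4 * s)) (1 / (2 * s)) x := by
      have h := (((hasDerivAt_id x).const_mul (2:ℝ)).sub_const (2 + 2 * s ^ 2)).div_const (4 * s)
      refine h.congr_deriv ?_
      field_simp
      ring
    have hlt1 : (2 * x - (2 + 2 * s ^ 2)) / (4 * s) < 1 := by
      rw [div_lt_one (by positivity)]; nlinarith [hx.2]
    have hgt1 : -1 < (2 * x - (2 + 2 * s ^ 2)) / (4 * s) := by
      rw [lt_div_iff₀ (by positivity)]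
      nlinarith [hx.1]
    have harc1 : HasDerivAt (fun y : ℝ => Real.arcsin ((2 * y - (2 + 2 * s ^ 2)) / (4 * s)))
        (1 / Real.sqrt (1 - ((2 * x - (2 + 2 * s ^ 2)) / (4 * s)) ^ 2) * (1 / (2 * s))) x :=
      by have := (Real.hasDerivAt_arcsin hgt1.ne' hlt1.ne).comp x harg1; exact this
    have r1 : Real.sqrt (1 - ((2 * x - (2 + 2 * s ^ 2)) / (4 * s)) ^ 2) = S / (2 * s) := by
      rw [show 1 - ((2 * x - (2 + 2 * s ^ 2)) / (4 * s)) ^ 2 = (S / (2 * s)) ^ 2 by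
        rw [div_pow, div_pow, hS2]; field_simp; ring]
      exact Real.sqrt_sq (by positivity)
    -- second arcsin term
    have hvne : 4 * s * x ≠ 0 := by positivity
    have hu : HasDerivAt (fun y : ℝ => (2 + 2 * s ^ 2) * y - 2 * (1 - s ^ 2) ^ 2)
        (2 + 2 * s ^ 2) x := by
      have h := ((hasDerivAt_id x).const_mul (2 + 2 * s ^ 2)).sub_const (2 * (1 - s ^ 2) ^ 2)
      refine h.congr_deriv ?_; ring
    have hv : HasDerivAt (fun y : ℝ => 4 * s * y) (4 * s) x := by
      have h := (hasDerivAt_id x).const_mul (4 * s)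
      refine h.congr_deriv ?_; ring
    have harg2 : HasDerivAt (fun y : ℝ => ((2 + 2 * s ^ 2) * y - 2 * (1 - s ^ 2) ^ 2) / (4 * s * y))
        (((2 + 2 * s ^ 2) * (4 * s * x) -
          ((2 + 2 * s ^ 2) * x - 2 * (1 - s ^ 2) ^ 2) * (4 * s)) / (4 * s * x) ^ 2) x :=
      hu.div hv hvne
    have key : (4 * s * x) ^ 2 - ((2 + 2 * s ^ 2) * x - 2 * (1 - s ^ 2) ^ 2) ^ 2 =
        4 * (1 - s ^ 2) ^ 2 * (((1 + s) ^ 2 - x) * (x - (1 - s) ^ 2)) := by ring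
    have hkeypos : 0 < (4 * s * x) ^ 2 - ((2 + 2 * s ^ 2) * x - 2 * (1 - s ^ 2) ^ 2) ^ 2 := by
      rw [key]; have : 0 < 1 - s ^ 2 := by nlinarith
      positivity
    have hlt2 : ((2 + 2 * s ^ 2) * x - 2 * (1 - s ^ 2) ^ 2) / (4 * s * x) < 1 := by
      rw [div_lt_one (by positivity)]
      nlinarith [hkeypos]
    have hgt2 : -1 < ((2 + 2 * s ^ 2) * x - 2 * (1 - s ^ 2) ^ 2) / (4 * s * x) := by
      rw [lt_div_iff₀ (by positivity)]
      nlinarith [hkeypos]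
    have harc2 : HasDerivAt
        (fun y : ℝ => Real.arcsin (((2 + 2 * s ^ 2) * y - 2 * (1 - s ^ 2) ^ 2) / (4 * s * y)))
        (1 / Real.sqrt (1 - (((2 + 2 * s ^ 2) * x - 2 * (1 - s ^ 2) ^ 2) / (4 * s * x)) ^ 2) *
          (((2 + 2 * s ^ 2) * (4 * s * x) -
            ((2 + 2 * s ^ 2) * x - 2 * (1 - s ^ 2) ^ 2) * (4 * s)) / (4 * s * x) ^ 2)) x :=
      by have := (Real.hasDerivAt_arcsin hgt2.ne' hlt2.ne).comp x harg2; exact this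
    have r2 : Real.sqrt (1 - (((2 + 2 * s ^ 2) * x - 2 * (1 - s ^ 2) ^ 2) / (4 * s * x)) ^ 2) =
        (1 - s ^ 2) * S / (2 * s * x) := by
      rw [show 1 - (((2 + 2 * s ^ 2) * x - 2 * (1 - s ^ 2) ^ 2) / (4 * s * x)) ^ 2 =
          ((1 - s ^ 2) * S / (2 * s * x)) ^ 2 by
        rw [show ((1 - s ^ 2) * S / (2 * s * x)) ^ 2 = (1 - s ^ 2) ^ 2 * S ^ 2 / (2 * s * x) ^ 2 by
          ring, hS2]
        field_simp; ring]
      have h1 : 0 < 1 - s ^ 2 := by nlinarith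
      exact Real.sqrt_sq (by positivity)
    have H := ((harc1.sub (harc2.const_mul ((1 - s) / (1 + s)))).const_mul
      (1 / (2 * Real.pi * s ^ 2)))
    have HF : HasDerivAt F (1 / (2 * Real.pi * s ^ 2) *
        (1 / Real.sqrt (1 - ((2 * x - (2 + 2 * s ^ 2)) / (4 * s)) ^ 2) * (1 / (2 * s)) -
          (1 - s) / (1 + s) *
            (1 / Real.sqrt (1 - (((2 + 2 * s ^ 2) * x - 2 * (1 - s ^ 2) ^ 2) / (4 * s * x)) ^ 2) *
              (((2 + 2 * s ^ 2) * (4 * s * x) -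
                ((2 + 2 * s ^ 2) * x - 2 * (1 - s ^ 2) ^ 2) * (4 * s)) / (4 * s * x) ^ 2)))) x := H
    convert HF using 1
    have hnum : (2 + 2 * s ^ 2) * (4 * s * x) -
        ((2 + 2 * s ^ 2) * x - 2 * (1 - s ^ 2) ^ 2) * (4 * s) = 8 * s * (1 - s ^ 2) ^ 2 := by ring
    have h1s2 : (0:ℝ) < 1 - s ^ 2 := by nlinarith
    rw [r1, r2, hnum, div_div]
    rw [show S / (2 * π * s ^ 2 * x * ((1 + s) ^ 2 - x)) =
        (x - (1 - s) ^ 2) / (2 * π * s ^ 2 * x * S) from by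
      rw [div_eq_div_iff (by positivity) (by positivity)]
      linear_combination (2 * π * s ^ 2 * x) * hS2]
    field_simp
    ring
  have hnonneg : ∀ x ∈ Set.Ioo ((1 - s) ^ 2) ((1 + s) ^ 2),
      0 ≤ (Real.sqrt (((1 + s) ^ 2 - x) * (x - (1 - s) ^ 2)) /
          (2 * Real.pi * s ^ 2 * x)) / ((1 + s) ^ 2 - x) := by
    intro x hx
    have hx0 : 0 < x := lt_of_lt_of_le ha hx.1.le
    have hbx : 0 < (1 + s) ^ 2 - x := by linarith [hx.2]
    have := Real.sqrt_nonneg (((1 + s) ^ 2 - x) * (x - (1 - s) ^ 2))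
    positivity
  have hint : IntervalIntegrable (fun x => (Real.sqrt (((1 + s) ^ 2 - x) * (x - (1 - s) ^ 2)) /
        (2 * Real.pi * s ^ 2 * x)) / ((1 + s) ^ 2 - x)) MeasureTheory.volume
      ((1 - s) ^ 2) ((1 + s) ^ 2) := by
    apply intervalIntegral.intervalIntegrable_deriv_of_nonneg (g := F)
    · rwa [Set.uIcc_of_le hab.le]
    · rwa [min_eq_left hab.le, max_eq_right hab.le]
    · rwa [min_eq_left hab.le, max_eq_right hab.le]
  rw [intervalIntegral.integral_eq_sub_of_hasDerivAt_of_le hab.le hcont hderiv hint]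
  have e1b : (2 * (1 + s) ^ 2 - (2 + 2 * s ^ 2)) / (4 * s) = 1 := by
    rw [div_eq_one_iff_eq (by positivity)]; ring
  have e2b : ((2 + 2 * s ^ 2) * (1 + s) ^ 2 - 2 * (1 - s ^ 2) ^ 2) / (4 * s * (1 + s) ^ 2) = 1 := by
    rw [div_eq_one_iff_eq (by positivity)]; ring
  have e1a : (2 * (1 - s) ^ 2 - (2 + 2 * s ^ 2)) / (4 * s) = -1 := by
    rw [div_eq_iff (by positivity : (4*s:ℝ) ≠ 0)]; ring
  have e2a : ((2 + 2 * s ^ 2) * (1 - s) ^ 2 - 2 * (1 - s ^ 2) ^ 2) / (4 * s * (1 - s) ^ 2) = -1 := by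
    rw [div_eq_iff (by positivity : (4*s*(1-s)^2:ℝ) ≠ 0)]; ring
  rw [hF]
  simp only [e1b, e2b, e1a, e2a, Real.arcsin_one, Real.arcsin_neg_one]
  field_simp
  ring


theorem mp_edge_one :
    (∫ x in ((1 - (1:ℝ)) ^ 2)..((1 + (1:ℝ)) ^ 2),
        (Real.sqrt (((1 + (1:ℝ)) ^ 2 - x) * (x - (1 - (1:ℝ)) ^ 2)) /
          (2 * Real.pi * 1 * x)) / ((1 + (1:ℝ)) ^ 2 - x))
      = 1 / ((1:ℝ) * (1 + 1)) := by
  have hpi := Real.pi_pos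
  set F : ℝ → ℝ := fun x => 1 / (2 * Real.pi) * Real.arcsin ((x - 2) / 2) with hF
  have hcont : ContinuousOn F (Set.Icc ((1 - (1:ℝ)) ^ 2) ((1 + (1:ℝ)) ^ 2)) := by
    apply ContinuousOn.mul continuousOn_const
    exact Real.continuous_arcsin.comp_continuousOn (by fun_prop)
  have hderiv : ∀ x ∈ Set.Ioo ((1 - (1:ℝ)) ^ 2) ((1 + (1:ℝ)) ^ 2),
      HasDerivAt F ((Real.sqrt (((1 + (1:ℝ)) ^ 2 - x) * (x - (1 - (1:ℝ)) ^ 2)) /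
          (2 * Real.pi * 1 * x)) / ((1 + (1:ℝ)) ^ 2 - x)) x := by
    intro x hx
    simp only [Set.mem_Ioo] at hx
    norm_num at hx
    obtain ⟨hx0, hx4⟩ := hx
    have hbx : 0 < 4 - x := by linarith
    set S : ℝ := Real.sqrt (((1 + (1:ℝ)) ^ 2 - x) * (x - (1 - (1:ℝ)) ^ 2)) with hS_def
    have hSS : S = Real.sqrt ((4 - x) * x) := by norm_num [hS_def]
    have hS2 : S ^ 2 = (4 - x) * x := by rw [hSS]; exact Real.sq_sqrt (by positivity)
    have hS0 : 0 < S := by rw [hSS]; exact Real.sqrt_pos.mpr (by positivity)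
    have harg : HasDerivAt (fun y : ℝ => (y - 2) / 2) (1 / 2) x := by
      have h := ((hasDerivAt_id x).sub_const 2).div_const 2
      exact h
    have hlt : (x - 2) / 2 < 1 := by rw [div_lt_one (by norm_num)]; linarith
    have hgt : -1 < (x - 2) / 2 := by rw [lt_div_iff₀ (by norm_num : (0:ℝ) < 2)]; linarith
    have harc : HasDerivAt (fun y : ℝ => Real.arcsin ((y - 2) / 2))
        (1 / Real.sqrt (1 - ((x - 2) / 2) ^ 2) * (1 / 2)) x :=
      by have := (Real.hasDerivAt_arcsin hgt.ne' hlt.ne).comp x harg; exact this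
    have r : Real.sqrt (1 - ((x - 2) / 2) ^ 2) = S / 2 := by
      rw [show 1 - ((x - 2) / 2) ^ 2 = (S / 2) ^ 2 by
        rw [show (S / 2) ^ 2 = S ^ 2 / 4 by ring, hS2]; ring]
      exact Real.sqrt_sq (by positivity)
    have HF : HasDerivAt F (1 / (2 * Real.pi) *
        (1 / Real.sqrt (1 - ((x - 2) / 2) ^ 2) * (1 / 2))) x := harc.const_mul _
    have hbx' : (0:ℝ) < (1 + (1:ℝ)) ^ 2 - x := by norm_num; linarith
    convert HF using 1
    rw [r, div_div]
    rw [show S / (2 * π * 1 * x * ((1 + (1:ℝ)) ^ 2 - x)) = 1 / (2 * π * S) from by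
      rw [div_eq_div_iff (by positivity) (by positivity)]
      linear_combination (2 * π) * hS2]
    field_simp
  have hnonneg : ∀ x ∈ Set.Ioo ((1 - (1:ℝ)) ^ 2) ((1 + (1:ℝ)) ^ 2),
      0 ≤ (Real.sqrt (((1 + (1:ℝ)) ^ 2 - x) * (x - (1 - (1:ℝ)) ^ 2)) /
          (2 * Real.pi * 1 * x)) / ((1 + (1:ℝ)) ^ 2 - x) := by
    intro x hx
    simp only [Set.mem_Ioo] at hx
    norm_num at hx
    obtain ⟨hx0, hx4⟩ := hx
    have hbx : (0:ℝ) < (1 + (1:ℝ)) ^ 2 - x := by norm_num; linarith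
    have hs := Real.sqrt_nonneg (((1 + (1:ℝ)) ^ 2 - x) * (x - (1 - (1:ℝ)) ^ 2))
    positivity
  have hab : ((1 - (1:ℝ)) ^ 2) < ((1 + (1:ℝ)) ^ 2) := by norm_num
  have hint : IntervalIntegrable (fun x => (Real.sqrt (((1 + (1:ℝ)) ^ 2 - x) * (x - (1 - (1:ℝ)) ^ 2)) /
        (2 * Real.pi * 1 * x)) / ((1 + (1:ℝ)) ^ 2 - x)) MeasureTheory.volume
      ((1 - (1:ℝ)) ^ 2) ((1 + (1:ℝ)) ^ 2) := by
    apply intervalIntegral.intervalIntegrable_deriv_of_nonneg (g := F)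
    · rwa [Set.uIcc_of_le hab.le]
    · rwa [min_eq_left hab.le, max_eq_right hab.le]
    · rwa [min_eq_left hab.le, max_eq_right hab.le]
  rw [intervalIntegral.integral_eq_sub_of_hasDerivAt_of_le hab.le hcont hderiv hint]
  rw [hF]
  norm_num
  field_simp
  ring

/-- For `0 < λ ≤ 1`, with `d₊ = (1+√λ)²`, `d₋ = (1-√λ)²`, the
Marčenko–Pastur density `p(x) = √((d₊-x)(x-d₋))/(2πλx)` satisfies
`∫_{d₋}^{d₊} p(x)/(d₊-x) dx = 1/(√λ(1+√λ))`. -/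
theorem mp_stieltjes_at_edge (l : ℝ) (hl0 : 0 < l) (hl1 : l ≤ 1) :
    (∫ x in ((1 - Real.sqrt l) ^ 2)..((1 + Real.sqrt l) ^ 2),
        (Real.sqrt (((1 + Real.sqrt l) ^ 2 - x) * (x - (1 - Real.sqrt l) ^ 2)) /
          (2 * Real.pi * l * x)) / ((1 + Real.sqrt l) ^ 2 - x))
      = 1 / (Real.sqrt l * (1 + Real.sqrt l)) := by
  rcases eq_or_lt_of_le hl1 with h1 | h1
  · subst h1
    simpa only [Real.sqrt_one] using mp_edge_one
  · have hs0 : 0 < Real.sqrt l := Real.sqrt_pos.mpr hl0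
    have hsq : Real.sqrt l ^ 2 = l := Real.sq_sqrt hl0.le
    have hs1 : Real.sqrt l < 1 := by nlinarith [hsq, hs0]
    simpa only [hsq] using mp_core (Real.sqrt l) hs0 hs1
end

section
/- Let 0 < λ ≤ 1 with d_± = (1±√λ)², and let L_∞(z) = ∫_{d_−}^{d_+} p(x)/(z − x) dx where p is the Marčenko–Pastur density. There exist constants C₁, C₂, s₀ > 0 such that for all 0 < s < s₀: −C₂ s^{-1/2} ≤ L_∞'(d_+ + s) ≤ −C₁ s^{-1/2}. -/
open Real

open MeasureTheory Set



private lemma invSqrt_integrableOn {a b : ℝ} (ha : 0 ≤ a) :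
    IntegrableOn (fun x : ℝ => (Real.sqrt x)⁻¹) (Set.Ioc a b) := by
  have h : IntegrableOn (fun x : ℝ => x ^ (-(1:ℝ)/2)) (Set.Ioc a b) := by
    rcases le_or_gt a b with hab | hab
    · exact (intervalIntegrable_iff_integrableOn_Ioc_of_le hab).mp
        (intervalIntegral.intervalIntegrable_rpow' (by norm_num))
    · rw [Set.Ioc_eq_empty (not_lt.mpr hab.le)]
      exact integrableOn_empty
  refine h.congr_fun (fun x hx => ?_) measurableSet_Ioc
  have hx0 : 0 ≤ x := le_trans ha hx.1.le
  simp only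
  rw [show (-(1:ℝ)/2) = -(1/2:ℝ) by norm_num, Real.rpow_neg hx0, ← Real.sqrt_eq_rpow]

private lemma invSqrt_integral_le {a b : ℝ} (ha : 0 ≤ a) (hab : a ≤ b) :
    ∫ x in Set.Ioc a b, (Real.sqrt x)⁻¹ ≤ 2 * Real.sqrt b := by
  rw [← intervalIntegral.integral_of_le hab]
  have heq : Set.EqOn (fun x : ℝ => (Real.sqrt x)⁻¹) (fun x : ℝ => x ^ (-(1:ℝ)/2))
      (Set.uIcc a b) := by
    intro x hx
    rw [Set.uIcc_of_le hab] at hx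
    have hx0 : 0 ≤ x := le_trans ha hx.1
    simp only
    rw [show (-(1:ℝ)/2) = -(1/2:ℝ) by norm_num, Real.rpow_neg hx0, ← Real.sqrt_eq_rpow]
  rw [intervalIntegral.integral_congr heq,
    integral_rpow (Or.inl (by norm_num))]
  have h1 : a ^ ((-(1:ℝ)/2) + 1) = Real.sqrt a := by
    rw [show (-(1:ℝ)/2) + 1 = 1/2 by norm_num, ← Real.sqrt_eq_rpow]
  have h2 : b ^ ((-(1:ℝ)/2) + 1) = Real.sqrt b := by
    rw [show (-(1:ℝ)/2) + 1 = 1/2 by norm_num, ← Real.sqrt_eq_rpow]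
  rw [h1, h2]
  have h3 := Real.sqrt_nonneg a
  have h4 := Real.sqrt_nonneg b
  rw [show (-(1:ℝ)/2 + 1) = 1/2 by norm_num]
  rw [div_le_iff₀ (by norm_num : (0:ℝ) < 1/2)]
  linarith


private lemma sqrt_div_sq_integrableOn {d c b : ℝ} (hbd : b < d) :
    IntegrableOn (fun x : ℝ => Real.sqrt (d - x) / (d - x)^2) (Set.Ioc c b) := by
  rcases le_or_gt c b with hcb | hcb
  · have hcont : ContinuousOn (fun x : ℝ => Real.sqrt (d - x) / (d - x)^2) (Set.Icc c b) := by
      apply ContinuousOn.div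
      · exact (Real.continuous_sqrt.comp (continuous_const.sub continuous_id)).continuousOn
      · exact ((continuous_const.sub continuous_id).pow 2).continuousOn
      · exact fun x hx => pow_ne_zero _ (ne_of_gt (sub_pos.mpr (lt_of_le_of_lt hx.2 hbd)))
    exact (hcont.integrableOn_Icc).mono_set Set.Ioc_subset_Icc_self
  · rw [Set.Ioc_eq_empty (not_lt.mpr hcb.le)]
    exact integrableOn_empty

private lemma sqrt_div_sq_integral_le {d c b : ℝ} (hcb : c ≤ b) (hbd : b < d) :
    ∫ x in Set.Ioc c b, Real.sqrt (d - x) / (d - x)^2 ≤ 2 * (Real.sqrt (d - b))⁻¹ := by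
  have hint : IntervalIntegrable (fun x : ℝ => Real.sqrt (d - x) / (d - x)^2) volume c b :=
    (intervalIntegrable_iff_integrableOn_Ioc_of_le hcb).mpr (sqrt_div_sq_integrableOn hbd)
  have hderiv : ∀ x ∈ Set.uIcc c b, HasDerivAt (fun y : ℝ => 2 * (Real.sqrt (d - y))⁻¹)
      (Real.sqrt (d - x) / (d - x)^2) x := by
    intro x hx
    rw [Set.uIcc_of_le hcb] at hx
    have hdx : 0 < d - x := by linarith [hx.2]
    have hsx : 0 < Real.sqrt (d - x) := Real.sqrt_pos.mpr hdx
    have hu : HasDerivAt (fun y : ℝ => d - y) (-1) x := by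
      simpa using (hasDerivAt_id x).const_sub d
    have hsq : HasDerivAt (fun y : ℝ => Real.sqrt (d - y)) (-1 / (2 * Real.sqrt (d - x))) x :=
      hu.sqrt hdx.ne'
    have hi := (hsq.inv hsx.ne').const_mul (2:ℝ)
    refine hi.congr_deriv (Eq.symm ?_)
    have h2 : Real.sqrt (d-x) * Real.sqrt (d-x) = d - x := Real.mul_self_sqrt hdx.le
    field_simp
    nlinarith [h2]
  rw [← intervalIntegral.integral_of_le hcb,
    intervalIntegral.integral_eq_sub_of_hasDerivAt hderiv hint]
  have h0 : 0 ≤ (Real.sqrt (d - c))⁻¹ := by positivity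
  linarith

/-- The Marčenko–Pastur density with parameter `λ`. -/
noncomputable def pMP (l x : ℝ) : ℝ :=
  Real.sqrt (((1 + Real.sqrt l) ^ 2 - x) * (x - (1 - Real.sqrt l) ^ 2)) /
    (2 * Real.pi * l * x)

private lemma pMP_measurable (l : ℝ) : Measurable (pMP l) := by
  unfold pMP
  fun_prop

private lemma pMP_nonneg {l x : ℝ} (hl0 : 0 < l) (hx : 0 < x) : 0 ≤ pMP l x := by
  unfold pMP
  have h : 0 < 2 * Real.pi * l * x :=
    mul_pos (mul_pos (by linarith [Real.pi_pos]) hl0) hx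
  exact div_nonneg (Real.sqrt_nonneg _) h.le

/-- crude upper bound, enough for integrability -/
private lemma pMP_le {l x : ℝ} (hl0 : 0 < l) (hl1 : l ≤ 1)
    (hx : x ∈ Set.Ioc ((1 - Real.sqrt l)^2) ((1 + Real.sqrt l)^2)) :
    pMP l x ≤ (1/(Real.pi*l)) * (Real.sqrt x)⁻¹ := by
  have hx0 : 0 < x := lt_of_le_of_lt (sq_nonneg _) hx.1
  have hsx : 0 < Real.sqrt x := Real.sqrt_pos.mpr hx0
  have ha0 : 0 < Real.sqrt l := Real.sqrt_pos.mpr hl0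
  have ha1 : Real.sqrt l ≤ 1 := Real.sqrt_le_one.mpr hl1
  have hsql : Real.sqrt l * Real.sqrt l = l := Real.mul_self_sqrt hl0.le
  have hdp4 : (1 + Real.sqrt l)^2 ≤ 4 := by nlinarith
  have hnum : Real.sqrt (((1 + Real.sqrt l) ^ 2 - x) * (x - (1 - Real.sqrt l) ^ 2))
      ≤ 2 * Real.sqrt x := by
    rw [show (2:ℝ) * Real.sqrt x = Real.sqrt 4 * Real.sqrt x by
      rw [show (4:ℝ) = 2^2 by norm_num, Real.sqrt_sq (by norm_num : (0:ℝ) ≤ 2)],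
      ← Real.sqrt_mul (by norm_num : (0:ℝ) ≤ 4)]
    apply Real.sqrt_le_sqrt
    have h1 : (1 + Real.sqrt l)^2 - x ≤ 4 := by linarith
    have h2 : x - (1 - Real.sqrt l)^2 ≤ x := by nlinarith [sq_nonneg (1 - Real.sqrt l)]
    have h3 : 0 ≤ (1 + Real.sqrt l)^2 - x := by linarith [hx.2]
    have h4 : 0 ≤ x - (1 - Real.sqrt l)^2 := by linarith [hx.1.le]
    nlinarith
  unfold pMP
  have hden : 0 < 2 * Real.pi * l * x :=
    mul_pos (mul_pos (by linarith [Real.pi_pos]) hl0) hx0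
  rw [div_le_iff₀ hden]
  have hgoal : (1/(Real.pi*l)) * (Real.sqrt x)⁻¹ * (2 * Real.pi * l * x) = 2 * Real.sqrt x := by
    have hinv : (Real.sqrt x)⁻¹ = Real.sqrt x / x := by
      field_simp
      rw [Real.sq_sqrt hx0.le]
    rw [hinv]
    field_simp
  rw [hgoal]
  exact hnum

private lemma mp_hasDerivAt (l : ℝ) (hl0 : 0 < l) (hl1 : l ≤ 1) (s : ℝ) (hs : 0 < s) :
    IntegrableOn (fun x => pMP l x / ((1 + Real.sqrt l)^2 + s - x)^2)
      (Set.Ioc ((1 - Real.sqrt l)^2) ((1 + Real.sqrt l)^2)) volume ∧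
    HasDerivAt (fun t : ℝ => ∫ x in Set.Ioc ((1 - Real.sqrt l)^2) ((1 + Real.sqrt l)^2),
        pMP l x / ((1 + Real.sqrt l)^2 + t - x))
      (∫ x in Set.Ioc ((1 - Real.sqrt l)^2) ((1 + Real.sqrt l)^2),
        -(pMP l x / ((1 + Real.sqrt l)^2 + s - x)^2)) s := by
  have hdm0 : (0:ℝ) ≤ (1 - Real.sqrt l)^2 := sq_nonneg _
  have hpi : (0:ℝ) < Real.pi := Real.pi_pos
  set dm := (1 - Real.sqrt l)^2 with hdm_def
  set dp := (1 + Real.sqrt l)^2 with hdp_def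
  have hmeas : ∀ t : ℝ, AEStronglyMeasurable (fun x => pMP l x / (dp + t - x))
      (volume.restrict (Set.Ioc dm dp)) := fun t =>
    ((pMP_measurable l).div (measurable_const.sub measurable_id)).aestronglyMeasurable
  have hmeas' : AEStronglyMeasurable (fun x => -(pMP l x / (dp + s - x)^2))
      (volume.restrict (Set.Ioc dm dp)) :=
    (((pMP_measurable l).div ((measurable_const.sub measurable_id).pow_const 2)).neg).aestronglyMeasurable
  have hbound_int : Integrable (fun x : ℝ => (4/(Real.pi*l*s^2)) * (Real.sqrt x)⁻¹)
      (volume.restrict (Set.Ioc dm dp)) := (invSqrt_integrableOn hdm0).const_mul _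
  have key := hasDerivAt_integral_of_dominated_loc_of_deriv_le (μ := volume.restrict (Set.Ioc dm dp))
      (F := fun t x => pMP l x / (dp + t - x)) (F' := fun t x => -(pMP l x / (dp + t - x)^2))
      (x₀ := s) (bound := fun x : ℝ => (4/(Real.pi*l*s^2)) * (Real.sqrt x)⁻¹)
      (Metric.ball_mem_nhds s (half_pos hs)) (Filter.Eventually.of_forall hmeas) ?hFint hmeas' ?hbound hbound_int ?hdiff
  case hFint =>
    apply (hbound_int.const_mul (s/4)).mono (hmeas s)
    rw [ae_restrict_iff' measurableSet_Ioc]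
    refine Filter.Eventually.of_forall fun x hx => ?_
    have hx0 : 0 < x := lt_of_le_of_lt hdm0 hx.1
    have hp0 : 0 ≤ pMP l x := pMP_nonneg hl0 hx0
    have hden : s ≤ dp + s - x := by linarith [hx.2]
    have hle := pMP_le hl0 hl1 hx
    rw [Real.norm_eq_abs, Real.norm_eq_abs, abs_of_nonneg (div_nonneg hp0 (by linarith)),
      abs_of_nonneg (by positivity)]
    calc pMP l x / (dp + s - x) ≤ ((1/(Real.pi*l)) * (Real.sqrt x)⁻¹) / s :=
          div_le_div₀ (by positivity) hle hs hden
      _ = s/4 * ((4/(Real.pi*l*s^2)) * (Real.sqrt x)⁻¹) := by field_simp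
  case hbound =>
    rw [ae_restrict_iff' measurableSet_Ioc]
    refine Filter.Eventually.of_forall fun x hx t ht => ?_
    have hx0 : 0 < x := lt_of_le_of_lt hdm0 hx.1
    have hp0 : 0 ≤ pMP l x := pMP_nonneg hl0 hx0
    have hts : s/2 < t := by
      rw [Metric.mem_ball, Real.dist_eq] at ht
      cases' abs_lt.mp ht with h1 h2
      linarith
    have hden : s/2 ≤ dp + t - x := by linarith [hx.2]
    have hle := pMP_le hl0 hl1 hx
    have hden2 : (s/2)^2 ≤ (dp + t - x)^2 := by nlinarith
    rw [norm_neg, Real.norm_eq_abs, abs_of_nonneg (div_nonneg hp0 (by positivity))]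
    calc pMP l x / (dp + t - x)^2 ≤ ((1/(Real.pi*l)) * (Real.sqrt x)⁻¹) / ((s/2)^2) :=
          div_le_div₀ (by positivity) hle (by positivity) hden2
      _ = (4/(Real.pi*l*s^2)) * (Real.sqrt x)⁻¹ := by field_simp; ring
  case hdiff =>
    rw [ae_restrict_iff' measurableSet_Ioc]
    refine Filter.Eventually.of_forall fun x hx t ht => ?_
    have hts : s/2 < t := by
      rw [Metric.mem_ball, Real.dist_eq] at ht
      cases' abs_lt.mp ht with h1 h2
      linarith
    have hne : dp + t - x ≠ 0 := by
      have h2 : s/2 ≤ dp + t - x := by linarith [hx.2]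
      have : 0 < dp + t - x := by linarith
      exact this.ne'
    have hd : HasDerivAt (fun t : ℝ => dp + t - x) 1 t := by
      simpa using ((hasDerivAt_id t).const_add dp).sub_const x
    have hdiv := (hasDerivAt_const t (pMP l x)).div hd hne
    rw [zero_mul, zero_sub, mul_one, neg_div] at hdiv
    exact hdiv
  refine ⟨?_, key.2⟩
  have h := key.1.neg
  simp only [Pi.neg_def, neg_neg] at h
  exact h

private lemma pMP_le' {l x : ℝ} (hl0 : 0 < l)
    (hx : x ∈ Set.Ioc ((1 - Real.sqrt l)^2) ((1 + Real.sqrt l)^2)) :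
    pMP l x ≤ Real.sqrt ((1 + Real.sqrt l)^2 - x) * (Real.sqrt x)⁻¹ * (1/(2*Real.pi*l)) := by
  have hx0 : 0 < x := lt_of_le_of_lt (sq_nonneg _) hx.1
  have hsx : 0 < Real.sqrt x := Real.sqrt_pos.mpr hx0
  have hpi : (0:ℝ) < Real.pi := Real.pi_pos
  have hnum : Real.sqrt (((1 + Real.sqrt l) ^ 2 - x) * (x - (1 - Real.sqrt l) ^ 2))
      ≤ Real.sqrt ((1 + Real.sqrt l)^2 - x) * Real.sqrt x := by
    rw [← Real.sqrt_mul (by linarith [hx.2] : (0:ℝ) ≤ (1 + Real.sqrt l)^2 - x)]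
    apply Real.sqrt_le_sqrt
    have h3 : 0 ≤ (1 + Real.sqrt l)^2 - x := by linarith [hx.2]
    nlinarith [sq_nonneg (1 - Real.sqrt l), hx.1.le]
  unfold pMP
  have hden : 0 < 2 * Real.pi * l * x :=
    mul_pos (mul_pos (by linarith) hl0) hx0
  rw [div_le_iff₀ hden]
  have hinv : (Real.sqrt x)⁻¹ = Real.sqrt x / x := by field_simp; rw [Real.sq_sqrt hx0.le]
  rw [hinv]
  have heq : Real.sqrt ((1 + Real.sqrt l)^2 - x) * (Real.sqrt x / x) * (1/(2*Real.pi*l))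
        * (2 * Real.pi * l * x) = Real.sqrt ((1 + Real.sqrt l)^2 - x) * Real.sqrt x := by
    field_simp [hx0.ne', hpi.ne', hl0.ne']
  rw [heq]
  exact hnum

private lemma pMP_ge {l x : ℝ} (hl0 : 0 < l) (hl1 : l ≤ 1)
    (hx : x ∈ Set.Icc (1 + l) ((1 + Real.sqrt l)^2)) :
    Real.sqrt (2*Real.sqrt l) * Real.sqrt ((1 + Real.sqrt l)^2 - x) / (8*Real.pi*l)
      ≤ pMP l x := by
  have hx0 : 0 < x := by have := hx.1; linarith
  have hpi : (0:ℝ) < Real.pi := Real.pi_pos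
  have ha0 : 0 < Real.sqrt l := Real.sqrt_pos.mpr hl0
  have ha1 : Real.sqrt l ≤ 1 := Real.sqrt_le_one.mpr hl1
  have hsql : Real.sqrt l * Real.sqrt l = l := Real.mul_self_sqrt hl0.le
  have hdp4 : (1 + Real.sqrt l)^2 ≤ 4 := by nlinarith
  have hxdm : 2*Real.sqrt l ≤ x - (1 - Real.sqrt l)^2 := by nlinarith [hx.1]
  have hdpx : 0 ≤ (1 + Real.sqrt l)^2 - x := by linarith [hx.2]
  unfold pMP
  apply div_le_div₀ (Real.sqrt_nonneg _)
  · rw [← Real.sqrt_mul (by positivity : (0:ℝ) ≤ 2*Real.sqrt l)]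
    apply Real.sqrt_le_sqrt
    nlinarith
  · exact mul_pos (mul_pos (by linarith) hl0) hx0
  · nlinarith [mul_pos hpi hl0, hx.2, hdp4]

set_option maxHeartbeats 1600000 in
/-- with `L_∞(d₊+s) = ∫_{d₋}^{d₊} p(x)/(d₊+s-x) dx`, there are
`C₁, C₂, s₀ > 0` so that for `0 < s < s₀`, `-C₂ s^{-1/2} ≤ L_∞'(d₊+s) ≤ -C₁ s^{-1/2}`. -/
theorem mp_stieltjes_deriv_bounds (l : ℝ) (hl0 : 0 < l) (hl1 : l ≤ 1) :
    ∃ C₁ C₂ s₀ : ℝ, 0 < C₁ ∧ 0 < C₂ ∧ 0 < s₀ ∧ ∀ s : ℝ, 0 < s → s < s₀ →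
      (-C₂ * s ^ (-(1 : ℝ) / 2) ≤
        deriv (fun t : ℝ =>
          ∫ x in ((1 - Real.sqrt l) ^ 2)..((1 + Real.sqrt l) ^ 2),
            pMP l x / ((1 + Real.sqrt l) ^ 2 + t - x)) s) ∧
      (deriv (fun t : ℝ =>
          ∫ x in ((1 - Real.sqrt l) ^ 2)..((1 + Real.sqrt l) ^ 2),
            pMP l x / ((1 + Real.sqrt l) ^ 2 + t - x)) s ≤
        -C₁ * s ^ (-(1 : ℝ) / 2)) := by
  have ha0 : 0 < Real.sqrt l := Real.sqrt_pos.mpr hl0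
  have ha1 : Real.sqrt l ≤ 1 := Real.sqrt_le_one.mpr hl1
  have hsql : Real.sqrt l * Real.sqrt l = l := Real.mul_self_sqrt hl0.le
  have hpi : (0:ℝ) < Real.pi := Real.pi_pos
  set dm := (1 - Real.sqrt l)^2 with hdm_def
  set dp := (1 + Real.sqrt l)^2 with hdp_def
  have hdm : dm = 1 - 2*Real.sqrt l + l := by rw [hdm_def, sub_sq, Real.sq_sqrt hl0.le]; ring
  have hdp : dp = 1 + 2*Real.sqrt l + l := by rw [hdp_def, add_sq, Real.sq_sqrt hl0.le]; ring
  have hdm0 : (0:ℝ) ≤ dm := sq_nonneg _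
  have hdm1 : dm ≤ 1 := by nlinarith
  have hdp4 : dp ≤ 4 := by nlinarith
  have hdmdp : dm ≤ dp := by nlinarith
  clear_value dm dp
  refine ⟨Real.sqrt (2*Real.sqrt l)/(72*Real.pi*l),
    3/(4*Real.pi*l^2) + 1/(Real.pi*l) + 1/(2*Real.pi*l), Real.sqrt l,
    by positivity, by positivity, ha0, ?_⟩
  intro s hs hss
  have hs1 : s ≤ 1 := le_trans hss.le ha1
  have hsq : 0 < Real.sqrt s := Real.sqrt_pos.mpr hs
  have hsqs : Real.sqrt s * Real.sqrt s = s := Real.mul_self_sqrt hs.le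
  have hsq1 : Real.sqrt s ≤ 1 := Real.sqrt_le_one.mpr hs1
  have hinv_s : (Real.sqrt s)⁻¹ = Real.sqrt s / s := by field_simp; rw [Real.sq_sqrt hs.le]
  have hinv1 : 1 ≤ (Real.sqrt s)⁻¹ := by
    have hinvmul : (Real.sqrt s)⁻¹ * Real.sqrt s = 1 := inv_mul_cancel₀ hsq.ne'
    nlinarith [inv_pos.mpr hsq]
  have hrpow : s ^ (-(1:ℝ)/2) = (Real.sqrt s)⁻¹ := by
    rw [show -(1:ℝ)/2 = -(1/2:ℝ) by norm_num, Real.rpow_neg hs.le, ← Real.sqrt_eq_rpow]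
  obtain ⟨hInt, hDeriv⟩ := mp_hasDerivAt l hl0 hl1 s hs
  rw [← hdm_def, ← hdp_def] at hInt hDeriv
  have hfun : (fun t : ℝ => ∫ x in dm..dp, pMP l x / (dp + t - x)) =
      (fun t : ℝ => ∫ x in Set.Ioc dm dp, pMP l x / (dp + t - x)) :=
    funext fun t => intervalIntegral.integral_of_le hdmdp
  rw [hfun, hDeriv.deriv, MeasureTheory.integral_neg, hrpow]
  -- pointwise bounds on the set
  have hf0 : ∀ x ∈ Set.Ioc dm dp, 0 ≤ pMP l x / (dp + s - x)^2 := fun x hx =>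
    div_nonneg (pMP_nonneg hl0 (lt_of_le_of_lt hdm0 hx.1)) (sq_nonneg _)
  -- ====== LOWER BOUND for the integral ======
  have hIge : Real.sqrt (2*Real.sqrt l)/(72*Real.pi*l) * (Real.sqrt s)⁻¹ ≤
      ∫ x in Set.Ioc dm dp, pMP l x / (dp + s - x)^2 := by
    have hsub : Set.Ioc (dp - 2*s) (dp - s) ⊆ Set.Ioc dm dp :=
      Set.Ioc_subset_Ioc (by nlinarith) (by linarith)
    have hmono : (∫ x in Set.Ioc (dp - 2*s) (dp - s), pMP l x / (dp + s - x)^2) ≤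
        ∫ x in Set.Ioc dm dp, pMP l x / (dp + s - x)^2 := by
      apply MeasureTheory.setIntegral_mono_set hInt
      · filter_upwards [MeasureTheory.ae_restrict_mem measurableSet_Ioc] with x hx
        exact hf0 x hx
      · exact Filter.Eventually.of_forall hsub
    have hpt : ∀ x ∈ Set.Ioc (dp - 2*s) (dp - s),
        Real.sqrt (2*Real.sqrt l)/(72*Real.pi*l) * (Real.sqrt s/s^2) ≤
          pMP l x / (dp + s - x)^2 := by
      intro x hx
      have hxIcc : x ∈ Set.Icc (1 + l) ((1 + Real.sqrt l)^2) := by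
        rw [← hdp_def]
        exact ⟨by nlinarith [hx.1], by linarith [hx.2]⟩
      have hge := pMP_ge hl0 hl1 hxIcc
      rw [← hdp_def] at hge
      have hsdx : Real.sqrt s ≤ Real.sqrt (dp - x) := Real.sqrt_le_sqrt (by linarith [hx.2])
      have h1 : Real.sqrt (2*Real.sqrt l) * Real.sqrt s / (8*Real.pi*l) ≤ pMP l x := by
        refine le_trans ?_ hge
        gcongr
      have hden2 : (dp + s - x)^2 ≤ 9*s^2 := by nlinarith [hx.1, hx.2]
      calc Real.sqrt (2*Real.sqrt l)/(72*Real.pi*l) * (Real.sqrt s/s^2)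
          = (Real.sqrt (2*Real.sqrt l) * Real.sqrt s / (8*Real.pi*l)) / (9*s^2) := by ring
        _ ≤ pMP l x / (dp + s - x)^2 :=
            div_le_div₀ (pMP_nonneg hl0 (by nlinarith [hx.1] : (0:ℝ) < x)) h1
              (by nlinarith [hx.2] : (0:ℝ) < (dp + s - x)^2) hden2
    have hconst := MeasureTheory.setIntegral_ge_of_const_le (μ := volume)
      measurableSet_Ioc (measure_Ioc_lt_top).ne hpt (hInt.mono_set hsub)
    have hvol : (volume (Set.Ioc (dp - 2*s) (dp - s))).toReal = s := by
      rw [Real.volume_Ioc, ENNReal.toReal_ofReal (by linarith)]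
      ring
    rw [measureReal_def, hvol] at hconst
    have heq : Real.sqrt (2*Real.sqrt l)/(72*Real.pi*l) * (Real.sqrt s/s^2) * s =
        Real.sqrt (2*Real.sqrt l)/(72*Real.pi*l) * (Real.sqrt s)⁻¹ := by
      rw [hinv_s]
      field_simp
    rw [smul_eq_mul, mul_comm, heq] at hconst
    linarith
  -- ====== UPPER BOUND for the integral ======
  have hIle : (∫ x in Set.Ioc dm dp, pMP l x / (dp + s - x)^2) ≤
      (3/(4*Real.pi*l^2) + 1/(Real.pi*l) + 1/(2*Real.pi*l)) * (Real.sqrt s)⁻¹ := by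
    have h1l : dm ≤ 1 + l := by linarith
    have hmid : 1 + l ≤ dp - s := by nlinarith
    have hhigh : dp - s ≤ dp := by linarith
    have hsubA : Set.Ioc dm (1+l) ⊆ Set.Ioc dm dp := Set.Ioc_subset_Ioc le_rfl (by linarith)
    have hsubB : Set.Ioc (1+l) (dp-s) ⊆ Set.Ioc dm dp := Set.Ioc_subset_Ioc h1l hhigh
    have hsubC : Set.Ioc (dp-s) dp ⊆ Set.Ioc dm dp := Set.Ioc_subset_Ioc (by linarith) le_rfl
    have hsubAB : Set.Ioc dm (dp-s) ⊆ Set.Ioc dm dp := Set.Ioc_subset_Ioc le_rfl hhigh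
    have hIntA := hInt.mono_set hsubA
    have hIntB := hInt.mono_set hsubB
    have hIntC := hInt.mono_set hsubC
    have hIntAB := hInt.mono_set hsubAB
    have hsplit : (∫ x in Set.Ioc dm dp, pMP l x / (dp + s - x)^2) =
        (∫ x in Set.Ioc dm (1+l), pMP l x / (dp + s - x)^2) +
        (∫ x in Set.Ioc (1+l) (dp-s), pMP l x / (dp + s - x)^2) +
        (∫ x in Set.Ioc (dp-s) dp, pMP l x / (dp + s - x)^2) := by
      rw [← Set.Ioc_union_Ioc_eq_Ioc (le_trans h1l hmid) hhigh,
        MeasureTheory.setIntegral_union (Set.Ioc_disjoint_Ioc_of_le le_rfl) measurableSet_Ioc hIntAB hIntC,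
        ← Set.Ioc_union_Ioc_eq_Ioc h1l hmid,
        MeasureTheory.setIntegral_union (Set.Ioc_disjoint_Ioc_of_le le_rfl) measurableSet_Ioc hIntA hIntB]
    -- Piece A
    have hA : (∫ x in Set.Ioc dm (1+l), pMP l x / (dp + s - x)^2) ≤ 3/(4*Real.pi*l^2) := by
      have hptA : ∀ x ∈ Set.Ioc dm (1+l),
          pMP l x / (dp + s - x)^2 ≤ (1/(4*Real.pi*l^2)) * (Real.sqrt x)⁻¹ := by
        intro x hx
        have hxIoc : x ∈ Set.Ioc ((1 - Real.sqrt l)^2) ((1 + Real.sqrt l)^2) := by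
          rw [← hdm_def, ← hdp_def]
          exact hsubA hx
        have hx0 : 0 < x := lt_of_le_of_lt hdm0 hx.1
        have hsx : 0 < Real.sqrt x := Real.sqrt_pos.mpr hx0
        have hple := pMP_le' hl0 hxIoc
        rw [← hdp_def] at hple
        have hsdp2 : Real.sqrt (dp - x) ≤ 2 := by
          rw [show (2:ℝ) = Real.sqrt 4 by
            rw [show (4:ℝ) = 2^2 by norm_num, Real.sqrt_sq (by norm_num : (0:ℝ) ≤ 2)]]
          exact Real.sqrt_le_sqrt (by linarith [hx.1])
        have h1 : pMP l x ≤ 2 * (Real.sqrt x)⁻¹ * (1/(2*Real.pi*l)) := by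
          refine le_trans hple ?_
          gcongr
        have hden : 4*l ≤ (dp + s - x)^2 := by nlinarith [hx.2]
        calc pMP l x / (dp + s - x)^2
            ≤ (2 * (Real.sqrt x)⁻¹ * (1/(2*Real.pi*l))) / (4*l) :=
              div_le_div₀ (by positivity) h1 (by positivity) hden
          _ = (1/(4*Real.pi*l^2)) * (Real.sqrt x)⁻¹ := by
              field_simp
      calc (∫ x in Set.Ioc dm (1+l), pMP l x / (dp + s - x)^2)
          ≤ ∫ x in Set.Ioc dm (1+l), (1/(4*Real.pi*l^2)) * (Real.sqrt x)⁻¹ :=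
            MeasureTheory.setIntegral_mono_on hIntA
              ((invSqrt_integrableOn hdm0).const_mul _) measurableSet_Ioc hptA
        _ = (1/(4*Real.pi*l^2)) * ∫ x in Set.Ioc dm (1+l), (Real.sqrt x)⁻¹ :=
            MeasureTheory.integral_const_mul _ _
        _ ≤ (1/(4*Real.pi*l^2)) * (2 * Real.sqrt (1+l)) := by
            have := invSqrt_integral_le hdm0 h1l
            gcongr
        _ ≤ 3/(4*Real.pi*l^2) := by
            have h15 : Real.sqrt (1+l) ≤ 3/2 := by
              rw [show (3:ℝ)/2 = Real.sqrt ((3/2)^2) by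
                rw [Real.sqrt_sq (by norm_num : (0:ℝ) ≤ 3/2)]]
              exact Real.sqrt_le_sqrt (by nlinarith)
            have hu : (0:ℝ) < 1/(4*Real.pi*l^2) := by positivity
            calc (1/(4*Real.pi*l^2)) * (2 * Real.sqrt (1+l))
                ≤ (1/(4*Real.pi*l^2)) * 3 := by nlinarith
              _ = 3/(4*Real.pi*l^2) := by ring
    -- Piece B
    have hB : (∫ x in Set.Ioc (1+l) (dp-s), pMP l x / (dp + s - x)^2) ≤
        (1/(Real.pi*l)) * (Real.sqrt s)⁻¹ := by
      have hptB : ∀ x ∈ Set.Ioc (1+l) (dp-s),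
          pMP l x / (dp + s - x)^2 ≤ (1/(2*Real.pi*l)) * (Real.sqrt (dp - x)/(dp - x)^2) := by
        intro x hx
        have hxIoc : x ∈ Set.Ioc ((1 - Real.sqrt l)^2) ((1 + Real.sqrt l)^2) := by
          rw [← hdm_def, ← hdp_def]
          exact hsubB hx
        have hx1 : 1 ≤ x := by linarith [hx.1]
        have hinvx : (Real.sqrt x)⁻¹ ≤ 1 := by
          rw [inv_le_one_iff₀]
          right
          exact Real.one_le_sqrt.mpr hx1
        have hple := pMP_le' hl0 hxIoc
        rw [← hdp_def] at hple
        have h1 : pMP l x ≤ Real.sqrt (dp - x) * (1/(2*Real.pi*l)) := by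
          refine le_trans hple ?_
          rw [show Real.sqrt (dp - x) * (1/(2*Real.pi*l)) =
            Real.sqrt (dp - x) * 1 * (1/(2*Real.pi*l)) by ring]
          gcongr
        have hdxpos : 0 < dp - x := by linarith [hx.2]
        have hden : (dp - x)^2 ≤ (dp + s - x)^2 := by nlinarith
        calc pMP l x / (dp + s - x)^2
            ≤ (Real.sqrt (dp - x) * (1/(2*Real.pi*l))) / (dp - x)^2 :=
              div_le_div₀ (by positivity) h1 (by positivity) hden
          _ = (1/(2*Real.pi*l)) * (Real.sqrt (dp - x)/(dp - x)^2) := by ring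
      have hIntmaj : MeasureTheory.IntegrableOn
          (fun x : ℝ => (1/(2*Real.pi*l)) * (Real.sqrt (dp - x)/(dp - x)^2))
          (Set.Ioc (1+l) (dp-s)) volume :=
        (sqrt_div_sq_integrableOn (by linarith : dp - s < dp)).const_mul _
      calc (∫ x in Set.Ioc (1+l) (dp-s), pMP l x / (dp + s - x)^2)
          ≤ ∫ x in Set.Ioc (1+l) (dp-s), (1/(2*Real.pi*l)) * (Real.sqrt (dp - x)/(dp - x)^2) :=
            MeasureTheory.setIntegral_mono_on hIntB hIntmaj measurableSet_Ioc hptB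
        _ = (1/(2*Real.pi*l)) * ∫ x in Set.Ioc (1+l) (dp-s), Real.sqrt (dp - x)/(dp - x)^2 :=
            MeasureTheory.integral_const_mul _ _
        _ ≤ (1/(2*Real.pi*l)) * (2 * (Real.sqrt (dp - (dp - s)))⁻¹) := by
            have := sqrt_div_sq_integral_le hmid (by linarith : dp - s < dp)
            gcongr
        _ = (1/(Real.pi*l)) * (Real.sqrt s)⁻¹ := by
            rw [show dp - (dp - s) = s by ring]
            ring
    -- Piece C
    have hC : (∫ x in Set.Ioc (dp-s) dp, pMP l x / (dp + s - x)^2) ≤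
        (1/(2*Real.pi*l)) * (Real.sqrt s)⁻¹ := by
      have hptC : ∀ x ∈ Set.Ioc (dp-s) dp,
          pMP l x / (dp + s - x)^2 ≤ Real.sqrt s / (2*Real.pi*l*s^2) := by
        intro x hx
        have hxIoc : x ∈ Set.Ioc ((1 - Real.sqrt l)^2) ((1 + Real.sqrt l)^2) := by
          rw [← hdm_def, ← hdp_def]
          exact hsubC hx
        have hx1 : 1 ≤ x := by nlinarith [hx.1]
        have hinvx : (Real.sqrt x)⁻¹ ≤ 1 := by
          rw [inv_le_one_iff₀]
          right
          exact Real.one_le_sqrt.mpr hx1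
        have hple := pMP_le' hl0 hxIoc
        rw [← hdp_def] at hple
        have hsdx : Real.sqrt (dp - x) ≤ Real.sqrt s := Real.sqrt_le_sqrt (by linarith [hx.1])
        have h1 : pMP l x ≤ Real.sqrt s * (1/(2*Real.pi*l)) := by
          refine le_trans hple ?_
          rw [show Real.sqrt s * (1/(2*Real.pi*l)) =
            Real.sqrt s * 1 * (1/(2*Real.pi*l)) by ring]
          gcongr
        have hden : s^2 ≤ (dp + s - x)^2 := by nlinarith [hx.2]
        calc pMP l x / (dp + s - x)^2
            ≤ (Real.sqrt s * (1/(2*Real.pi*l))) / s^2 :=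
              div_le_div₀ (by positivity) h1 (by positivity) hden
          _ = Real.sqrt s / (2*Real.pi*l*s^2) := by
              field_simp
      calc (∫ x in Set.Ioc (dp-s) dp, pMP l x / (dp + s - x)^2)
          ≤ ∫ _x in Set.Ioc (dp-s) dp, Real.sqrt s / (2*Real.pi*l*s^2) :=
            MeasureTheory.setIntegral_mono_on hIntC
              (MeasureTheory.integrableOn_const measure_Ioc_lt_top.ne)
              measurableSet_Ioc hptC
        _ = Real.sqrt s / (2*Real.pi*l*s^2) * s := by
            rw [MeasureTheory.setIntegral_const, smul_eq_mul, measureReal_def, Real.volume_Ioc,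
              ENNReal.toReal_ofReal (by linarith), show dp - (dp - s) = s by ring, mul_comm]
        _ = (1/(2*Real.pi*l)) * (Real.sqrt s)⁻¹ := by
            rw [hinv_s]
            field_simp
    have hA' : (∫ x in Set.Ioc dm (1+l), pMP l x / (dp + s - x)^2) ≤
        3/(4*Real.pi*l^2) * (Real.sqrt s)⁻¹ :=
      le_trans hA (le_mul_of_one_le_right (by positivity) hinv1)
    rw [hsplit]
    nlinarith [hA', hB, hC]
  constructor
  · nlinarith [hIle]
  · nlinarith [hIge]
end
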